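/- Let p, q ≥ 2 be integers, μ ∈ ℂ ∖ {0}, and u₀, v₀ ∈ ℂ ∖ {0} with p·|u₀|^{p−1} = 1, q·|v₀|^{q−1} = 1, and Θ₂ = Θ₄ + κπ for some integer κ; assume cos Θ₂ ≠ 0 and set R̂ = R − tan(Θ₂)·Q. Then at x₀ = (|u₀|, arg u₀, |v₀|, arg v₀) the second partial derivatives of R̂ are: R̂_{r₁r₁}(x₀) = p(p−1)|μ||u₀|^{p−2} sin Θ₁ / cos Θ₂, R̂_{r₁θ₁}(x₀) = (p−1)|μ| cos Θ₁ / cos Θ₂, R̂_{θ₁θ₁}(x₀) = −(p−1)|μ||u₀| sin Θ₁ / cos Θ₂, R̂_{r₂r₂}(x₀) = (−1)^κ q(q−1)|v₀|^{q−2} sin Θ₃ / cos Θ₂, R̂_{r₂θ₂}(x₀) = (−1)^κ (q−1) cos Θ₃ / cos Θ₂, and R̂_{θ₂θ₂}(x₀) = (−1)^{κ+1} (q−1)|v₀| sin Θ₃ / cos Θ₂. -/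

import Mathlib

private lemma hd_lin (c d x : ℝ) : HasDerivAt (fun θ : ℝ => c * θ + d) c x := by
  simpa using ((hasDerivAt_id x).const_mul c).add_const d

private lemma hd_neg (d x : ℝ) : HasDerivAt (fun θ : ℝ => -θ + d) (-1) x := by
  simpa using ((hasDerivAt_id x).neg).add_const d

private lemma hd_T (A B t c d K x : ℝ) :
    HasDerivAt (fun θ => A * (Real.sin (c*θ+d) - t * Real.cos (c*θ+d))
      + B * (Real.sin (-θ+d) - t * Real.cos (-θ+d)) + K)
    (A * c * (Real.cos (c*x+d) + t * Real.sin (c*x+d))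
      - B * (Real.cos (-x+d) + t * Real.sin (-x+d))) x := by
  have h1 := hd_lin c d x
  have h2 := hd_neg d x
  have hs1 := (Real.hasDerivAt_sin (c*x+d)).comp x h1
  have hc1 := (Real.hasDerivAt_cos (c*x+d)).comp x h1
  have hs2 := (Real.hasDerivAt_sin (-x+d)).comp x h2
  have hc2 := (Real.hasDerivAt_cos (-x+d)).comp x h2
  have H := (((hs1.sub (hc1.const_mul t)).const_mul A).add
    ((hs2.sub (hc2.const_mul t)).const_mul B)).add_const K
  refine H.congr_deriv ?_
  ring

private lemma hd_U (A B t c d x : ℝ) :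
    HasDerivAt (fun θ => A * (Real.cos (c*θ+d) + t * Real.sin (c*θ+d))
      - B * (Real.cos (-θ+d) + t * Real.sin (-θ+d)))
    (-(A * c) * (Real.sin (c*x+d) - t * Real.cos (c*x+d))
      - B * (Real.sin (-x+d) - t * Real.cos (-x+d))) x := by
  have h1 := hd_lin c d x
  have h2 := hd_neg d x
  have hs1 := (Real.hasDerivAt_sin (c*x+d)).comp x h1
  have hc1 := (Real.hasDerivAt_cos (c*x+d)).comp x h1
  have hs2 := (Real.hasDerivAt_sin (-x+d)).comp x h2
  have hc2 := (Real.hasDerivAt_cos (-x+d)).comp x h2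
  have H := ((hc1.add (hs1.const_mul t)).const_mul A).sub
    ((hc2.add (hs2.const_mul t)).const_mul B)
  refine H.congr_deriv ?_
  ring

private lemma deriv2T (A B t c d K x : ℝ) :
    deriv (deriv (fun θ => A * (Real.sin (c*θ+d) - t * Real.cos (c*θ+d))
      + B * (Real.sin (-θ+d) - t * Real.cos (-θ+d)) + K)) x
    = -(A * c^2) * (Real.sin (c*x+d) - t * Real.cos (c*x+d))
      - B * (Real.sin (-x+d) - t * Real.cos (-x+d)) := by
  have h : deriv (fun θ => A * (Real.sin (c*θ+d) - t * Real.cos (c*θ+d))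
      + B * (Real.sin (-θ+d) - t * Real.cos (-θ+d)) + K)
      = fun y => (A * c) * (Real.cos (c*y+d) + t * Real.sin (c*y+d))
        - B * (Real.cos (-y+d) + t * Real.sin (-y+d)) := by
    funext y
    exact (hd_T A B t c d K y).deriv
  rw [h, (hd_U (A*c) B t c d x).deriv]
  ring

private lemma hd_P (A B K : ℝ) (n : ℕ) (x : ℝ) :
    HasDerivAt (fun r => A * r^n + B * r + K) (A * (↑n * x^(n-1)) + B) x := by
  have H := (((hasDerivAt_pow n x).const_mul A).add ((hasDerivAt_id x).const_mul B)).add_const K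
  refine H.congr_deriv ?_
  simp

private lemma deriv2P (A B K : ℝ) (n : ℕ) (hn : 2 ≤ n) (x : ℝ) :
    deriv (deriv (fun r => A * r^n + B * r + K)) x
    = A * ↑n * ((n:ℝ)-1) * x^(n-2) := by
  have h : deriv (fun r => A * r^n + B * r + K)
      = fun y => (A * ↑n) * y^(n-1) + 0 * y + B := by
    funext y
    rw [(hd_P A B K n y).deriv]
    ring
  rw [h, (hd_P (A * (↑n:ℝ)) 0 B (n-1) x).deriv]
  have h1 : n - 1 - 1 = n - 2 := by omega
  rw [h1, Nat.cast_sub (by omega : 1 ≤ n)]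
  push_cast
  ring

theorem second_derivatives_of_Rhat
    (p q : ℕ) (hp : 2 ≤ p) (hq : 2 ≤ q) (μ : ℂ) (hμ : μ ≠ 0)
    (u₀ v₀ : ℂ) (hu₀ : u₀ ≠ 0) (hv₀ : v₀ ≠ 0)
    (hu : (p : ℝ) * ‖u₀‖ ^ (p - 1) = 1)
    (hv : (q : ℝ) * ‖v₀‖ ^ (q - 1) = 1)
    (Q R Rhat : ℝ → ℝ → ℝ → ℝ → ℝ)
    (hQ : ∀ r₁ θ₁ r₂ θ₂, Q r₁ θ₁ r₂ θ₂ =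
      ‖μ‖ * r₁ ^ p * Real.cos (p * θ₁ + Complex.arg μ)
        + ‖μ‖ * r₁ * Real.cos (-θ₁ + Complex.arg μ)
        + r₂ ^ q * Real.cos (q * θ₂) + r₂ * Real.cos (-θ₂))
    (hR : ∀ r₁ θ₁ r₂ θ₂, R r₁ θ₁ r₂ θ₂ =
      ‖μ‖ * r₁ ^ p * Real.sin (p * θ₁ + Complex.arg μ)
        + ‖μ‖ * r₁ * Real.sin (-θ₁ + Complex.arg μ)
        + r₂ ^ q * Real.sin (q * θ₂) + r₂ * Real.sin (-θ₂))
    (Θ₁ Θ₂ Θ₃ Θ₄ : ℝ)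
    (hΘ₁ : Θ₁ = ((p : ℝ) + 1) / 2 * Complex.arg u₀)
    (hΘ₂ : Θ₂ = ((p : ℝ) - 1) / 2 * Complex.arg u₀ + Complex.arg μ)
    (hΘ₃ : Θ₃ = ((q : ℝ) + 1) / 2 * Complex.arg v₀)
    (hΘ₄ : Θ₄ = ((q : ℝ) - 1) / 2 * Complex.arg v₀)
    (κ : ℤ) (hκ : Θ₂ = Θ₄ + κ * Real.pi)
    (hcos : Real.cos Θ₂ ≠ 0)
    (hRhat : ∀ r₁ θ₁ r₂ θ₂, Rhat r₁ θ₁ r₂ θ₂ =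
      R r₁ θ₁ r₂ θ₂ - Real.tan Θ₂ * Q r₁ θ₁ r₂ θ₂) :
    deriv (deriv (fun r₁ => Rhat r₁ (Complex.arg u₀) (‖v₀‖) (Complex.arg v₀)))
        (‖u₀‖)
      = p * ((p : ℝ) - 1) * ‖μ‖ * ‖u₀‖ ^ (p - 2) * Real.sin Θ₁
          / Real.cos Θ₂ ∧
    deriv (fun θ₁ =>
        deriv (fun r₁ => Rhat r₁ θ₁ (‖v₀‖) (Complex.arg v₀)) (‖u₀‖))
        (Complex.arg u₀)
      = ((p : ℝ) - 1) * ‖μ‖ * Real.cos Θ₁ / Real.cos Θ₂ ∧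
    deriv (deriv (fun θ₁ => Rhat (‖u₀‖) θ₁ (‖v₀‖) (Complex.arg v₀)))
        (Complex.arg u₀)
      = -(((p : ℝ) - 1) * ‖μ‖ * ‖u₀‖ * Real.sin Θ₁) / Real.cos Θ₂ ∧
    deriv (deriv (fun r₂ => Rhat (‖u₀‖) (Complex.arg u₀) r₂ (Complex.arg v₀)))
        (‖v₀‖)
      = (-1 : ℝ) ^ κ * (q * ((q : ℝ) - 1) * ‖v₀‖ ^ (q - 2) * Real.sin Θ₃)
          / Real.cos Θ₂ ∧
    deriv (fun θ₂ =>
        deriv (fun r₂ => Rhat (‖u₀‖) (Complex.arg u₀) r₂ θ₂) (‖v₀‖))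
        (Complex.arg v₀)
      = (-1 : ℝ) ^ κ * (((q : ℝ) - 1) * Real.cos Θ₃) / Real.cos Θ₂ ∧
    deriv (deriv (fun θ₂ => Rhat (‖u₀‖) (Complex.arg u₀) (‖v₀‖) θ₂))
        (Complex.arg v₀)
      = (-1 : ℝ) ^ (κ + 1) * (((q : ℝ) - 1) * ‖v₀‖ * Real.sin Θ₃) / Real.cos Θ₂ := by
  set a := ‖μ‖ with ha
  set mφ := Complex.arg μ with hmφ
  set r₀ := ‖u₀‖ with hr₀
  set α := Complex.arg u₀ with hα
  set s₀ := ‖v₀‖ with hs₀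
  set β := Complex.arg v₀ with hβ
  have k1 : ∀ Y, Real.sin (Y + Θ₂) - Real.tan Θ₂ * Real.cos (Y + Θ₂)
      = Real.sin Y / Real.cos Θ₂ := by
    intro Y
    have hsY : Real.sin Y = Real.sin (Y+Θ₂) * Real.cos Θ₂ - Real.cos (Y+Θ₂) * Real.sin Θ₂ := by
      rw [← Real.sin_sub]; congr 1; ring
    rw [Real.tan_eq_sin_div_cos, hsY]
    field_simp
  have k2 : ∀ Y, Real.cos (Y + Θ₂) + Real.tan Θ₂ * Real.sin (Y + Θ₂)
      = Real.cos Y / Real.cos Θ₂ := by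
    intro Y
    have hcY : Real.cos Y = Real.cos (Y+Θ₂) * Real.cos Θ₂ + Real.sin (Y+Θ₂) * Real.sin Θ₂ := by
      rw [← Real.cos_sub]; congr 1; ring
    rw [Real.tan_eq_sin_div_cos, hcY]
    field_simp
  have hX1 : (p:ℝ) * α + mφ = Θ₁ + Θ₂ := by rw [hΘ₁, hΘ₂]; ring
  have hX2 : -α + mφ = -Θ₁ + Θ₂ := by rw [hΘ₁, hΘ₂]; ring
  have hY1 : (q:ℝ) * β = Θ₃ - ↑κ * Real.pi + Θ₂ := by rw [hΘ₃, hκ, hΘ₄]; ring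
  have hY1z : (q:ℝ) * β + 0 = Θ₃ - ↑κ * Real.pi + Θ₂ := by rw [hΘ₃, hκ, hΘ₄]; ring
  have hY2z : -β + 0 = -Θ₃ - ↑κ * Real.pi + Θ₂ := by rw [hΘ₃, hκ, hΘ₄]; ring
  have hpow : r₀ ^ p = r₀ ^ (p-1) * r₀ := by rw [← pow_succ]; congr 1; omega
  have hpowq : s₀ ^ q = s₀ ^ (q-1) * s₀ := by rw [← pow_succ]; congr 1; omega
  refine ⟨?_, ?_, ?_, ?_, ?_, ?_⟩
  · -- r₁r₁
    have e : (fun r₁ => Rhat r₁ α s₀ β) = fun r =>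
        (a * (Real.sin ((p:ℝ)*α + mφ) - Real.tan Θ₂ * Real.cos ((p:ℝ)*α + mφ))) * r^p
        + (a * (Real.sin (-α + mφ) - Real.tan Θ₂ * Real.cos (-α + mφ))) * r
        + (s₀^q * Real.sin ((q:ℝ)*β) + s₀ * Real.sin (-β)
            - Real.tan Θ₂ * (s₀^q * Real.cos ((q:ℝ)*β) + s₀ * Real.cos (-β))) := by
      funext r; rw [hRhat, hR, hQ]; ring
    rw [e, deriv2P _ _ _ p hp, hX1, k1 Θ₁]
    ring
  · -- r₁θ₁
    have e1 : (fun θ => deriv (fun r => Rhat r θ s₀ β) r₀)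
        = fun θ => (a * (p:ℝ) * r₀^(p-1))
              * (Real.sin ((p:ℝ)*θ + mφ) - Real.tan Θ₂ * Real.cos ((p:ℝ)*θ + mφ))
            + a * (Real.sin (-θ + mφ) - Real.tan Θ₂ * Real.cos (-θ + mφ)) + 0 := by
      funext θ
      have e0 : (fun r => Rhat r θ s₀ β) = fun r =>
          (a * (Real.sin ((p:ℝ)*θ + mφ) - Real.tan Θ₂ * Real.cos ((p:ℝ)*θ + mφ))) * r^p
          + (a * (Real.sin (-θ + mφ) - Real.tan Θ₂ * Real.cos (-θ + mφ))) * r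
          + (s₀^q * Real.sin ((q:ℝ)*β) + s₀ * Real.sin (-β)
              - Real.tan Θ₂ * (s₀^q * Real.cos ((q:ℝ)*β) + s₀ * Real.cos (-β))) := by
        funext r; rw [hRhat, hR, hQ]; ring
      rw [e0, (hd_P _ _ _ p r₀).deriv]
      ring
    rw [e1, (hd_T (a * (p:ℝ) * r₀^(p-1)) a (Real.tan Θ₂) (p:ℝ) mφ 0 α).deriv,
      hX1, hX2, k2 Θ₁, k2 (-Θ₁), Real.cos_neg]
    linear_combination ((p:ℝ) * a * Real.cos Θ₁ / Real.cos Θ₂) * hu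
  · -- θ₁θ₁
    have e : (fun θ => Rhat r₀ θ s₀ β) = fun θ =>
        (a * r₀^p) * (Real.sin ((p:ℝ)*θ + mφ) - Real.tan Θ₂ * Real.cos ((p:ℝ)*θ + mφ))
        + (a * r₀) * (Real.sin (-θ + mφ) - Real.tan Θ₂ * Real.cos (-θ + mφ))
        + (s₀^q * Real.sin ((q:ℝ)*β) + s₀ * Real.sin (-β)
            - Real.tan Θ₂ * (s₀^q * Real.cos ((q:ℝ)*β) + s₀ * Real.cos (-β))) := by
      funext θ; rw [hRhat, hR, hQ]; ring
    rw [e, deriv2T, hX1, hX2, k1 Θ₁, k1 (-Θ₁), Real.sin_neg]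
    linear_combination (-(a * (p:ℝ) * r₀ * Real.sin Θ₁ / Real.cos Θ₂)) * hu
      + (-(a * ((p:ℝ))^2 * Real.sin Θ₁ / Real.cos Θ₂)) * hpow
  · -- r₂r₂
    have e : (fun r₂ => Rhat r₀ α r₂ β) = fun r =>
        (Real.sin ((q:ℝ)*β) - Real.tan Θ₂ * Real.cos ((q:ℝ)*β)) * r^q
        + (Real.sin (-β) - Real.tan Θ₂ * Real.cos (-β)) * r
        + (a * r₀^p * Real.sin ((p:ℝ)*α + mφ) + a * r₀ * Real.sin (-α + mφ)
            - Real.tan Θ₂ * (a * r₀^p * Real.cos ((p:ℝ)*α + mφ) + a * r₀ * Real.cos (-α + mφ))) := by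
      funext r; rw [hRhat, hR, hQ]; ring
    rw [e, deriv2P _ _ _ q hq, hY1, k1 (Θ₃ - ↑κ * Real.pi), Real.sin_sub_int_mul_pi]
    ring
  · -- r₂θ₂
    have e1 : (fun θ => deriv (fun r => Rhat r₀ α r θ) s₀)
        = fun θ => ((q:ℝ) * s₀^(q-1))
              * (Real.sin ((q:ℝ)*θ + 0) - Real.tan Θ₂ * Real.cos ((q:ℝ)*θ + 0))
            + 1 * (Real.sin (-θ + 0) - Real.tan Θ₂ * Real.cos (-θ + 0)) + 0 := by
      funext θ
      have e0 : (fun r => Rhat r₀ α r θ) = fun r =>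
          (Real.sin ((q:ℝ)*θ) - Real.tan Θ₂ * Real.cos ((q:ℝ)*θ)) * r^q
          + (Real.sin (-θ) - Real.tan Θ₂ * Real.cos (-θ)) * r
          + (a * r₀^p * Real.sin ((p:ℝ)*α + mφ) + a * r₀ * Real.sin (-α + mφ)
              - Real.tan Θ₂ * (a * r₀^p * Real.cos ((p:ℝ)*α + mφ) + a * r₀ * Real.cos (-α + mφ))) := by
        funext r; rw [hRhat, hR, hQ]; ring
      rw [e0, (hd_P _ _ _ q s₀).deriv]
      simp only [add_zero]
      ring
    rw [e1, (hd_T ((q:ℝ) * s₀^(q-1)) 1 (Real.tan Θ₂) (q:ℝ) 0 0 β).deriv,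
      hY1z, hY2z, k2 (Θ₃ - ↑κ * Real.pi), k2 (-Θ₃ - ↑κ * Real.pi),
      Real.cos_sub_int_mul_pi, Real.cos_sub_int_mul_pi, Real.cos_neg]
    linear_combination ((q:ℝ) * ((-1:ℝ)^κ) * Real.cos Θ₃ / Real.cos Θ₂) * hv
  · -- θ₂θ₂
    have e : (fun θ => Rhat r₀ α s₀ θ) = fun θ =>
        (s₀^q) * (Real.sin ((q:ℝ)*θ + 0) - Real.tan Θ₂ * Real.cos ((q:ℝ)*θ + 0))
        + s₀ * (Real.sin (-θ + 0) - Real.tan Θ₂ * Real.cos (-θ + 0))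
        + (a * r₀^p * Real.sin ((p:ℝ)*α + mφ) + a * r₀ * Real.sin (-α + mφ)
            - Real.tan Θ₂ * (a * r₀^p * Real.cos ((p:ℝ)*α + mφ) + a * r₀ * Real.cos (-α + mφ))) := by
      funext θ; rw [hRhat, hR, hQ]; simp only [add_zero]; ring
    have hz : ((-1:ℝ))^(κ+1) = -((-1:ℝ))^κ := by
      rw [zpow_add_one₀ (by norm_num : (-1:ℝ) ≠ 0)]; ring
    rw [e, deriv2T, hY1z, hY2z, k1 (Θ₃ - ↑κ * Real.pi), k1 (-Θ₃ - ↑κ * Real.pi),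
      Real.sin_sub_int_mul_pi, Real.sin_sub_int_mul_pi, Real.sin_neg, hz]
    linear_combination (-((q:ℝ) * s₀ * ((-1:ℝ)^κ) * Real.sin Θ₃ / Real.cos Θ₂)) * hv
      + (-(((q:ℝ))^2 * ((-1:ℝ)^κ) * Real.sin Θ₃ / Real.cos Θ₂)) * hpowq
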